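/- (Double robustness, propensity model correct) Let f(x|s) be the true conditional density of X given S, strictly positive, and let g(X,S) be any measurable function with appropriate integrability. Then E[ (f(X−δ|S)/f(X|S)) · (Y − g(X,S)) + g(X+δ,S) ] = E[ (f(X−δ|S)/f(X|S)) · Y ]. -/

import Mathlib

open MeasureTheory
open scoped ENNReal NNReal

/-- Double robustness when the propensity model is correct: if `f(x|s)` is the true
strictly positive conditional density of `X` given `S`, then for any measurable `g`,
`E[(f(X-δ|S)/f(X|S)) · (Y - g(X,S)) + g(X+δ,S)] = E[(f(X-δ|S)/f(X|S)) · Y]`. -/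
theorem doubly_robust_propensity_correct
    {Ω γ : Type*} [MeasurableSpace Ω] [MeasurableSpace γ]
    (μ : Measure Ω) [IsProbabilityMeasure μ]
    (ν : Measure γ) [SFinite ν]
    (Y : Ω → ℝ) (hY : Integrable Y μ)
    (X : Ω → ℝ) (hX : Measurable X)
    (S : Ω → γ) (hS : Measurable S)
    (f : ℝ → γ → ℝ) (hf_meas : Measurable (Function.uncurry f))
    (hf_pos : ∀ x s, 0 < f x s)
    -- `f` is the joint (conditional) density of `(X, S)` w.r.t. Lebesgue × base measure
    (hf_density : μ.map (fun ω => (X ω, S ω))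
      = ((volume : Measure ℝ).prod ν).withDensity (fun p => ENNReal.ofReal (f p.1 p.2)))
    (δ : ℝ)
    (g : ℝ × γ → ℝ) (hg_meas : Measurable g)
    -- all displayed expectations exist
    (h_int1 : Integrable
      (fun ω => (f (X ω - δ) (S ω) / f (X ω) (S ω)) * (Y ω - g (X ω, S ω))) μ)
    (h_int2 : Integrable (fun ω => g (X ω + δ, S ω)) μ)
    (h_int3 : Integrable (fun ω => (f (X ω - δ) (S ω) / f (X ω) (S ω)) * Y ω) μ) :
    ∫ ω, ((f (X ω - δ) (S ω) / f (X ω) (S ω)) * (Y ω - g (X ω, S ω))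
            + g (X ω + δ, S ω)) ∂μ
      = ∫ ω, (f (X ω - δ) (S ω) / f (X ω) (S ω)) * Y ω ∂μ := by
  have hT : Measurable (fun ω => (X ω, S ω)) := hX.prodMk hS
  -- measurability of f on product
  have hfm : Measurable (fun p : ℝ × γ => f p.1 p.2) := hf_meas
  have hfm' : Measurable (fun p : ℝ × γ => f (p.1 - δ) p.2) :=
    hf_meas.comp ((measurable_fst.sub measurable_const).prodMk measurable_snd)
  -- integrability of w * g
  have h_intwg : Integrable
      (fun ω => (f (X ω - δ) (S ω) / f (X ω) (S ω)) * g (X ω, S ω)) μ := by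
    have := h_int3.sub h_int1
    refine this.congr (Filter.Eventually.of_forall fun ω => ?_)
    simp only [Pi.sub_apply]
    ring
  have key : ∫ ω, (f (X ω - δ) (S ω) / f (X ω) (S ω)) * g (X ω, S ω) ∂μ
      = ∫ ω, g (X ω + δ, S ω) ∂μ := by
    have φ₁m : Measurable (fun p : ℝ × γ => (f (p.1 - δ) p.2 / f p.1 p.2) * g p) :=
      (hfm'.div hfm).mul hg_meas
    have φ₂m : Measurable (fun p : ℝ × γ => g (p.1 + δ, p.2)) :=
      hg_meas.comp ((measurable_fst.add measurable_const).prodMk measurable_snd)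
    have L : ∫ ω, (f (X ω - δ) (S ω) / f (X ω) (S ω)) * g (X ω, S ω) ∂μ
        = ∫ p : ℝ × γ, (f (p.1 - δ) p.2 / f p.1 p.2) * g p ∂(μ.map (fun ω => (X ω, S ω))) :=
      (integral_map hT.aemeasurable φ₁m.aestronglyMeasurable).symm
    have R : ∫ ω, g (X ω + δ, S ω) ∂μ
        = ∫ p : ℝ × γ, g (p.1 + δ, p.2) ∂(μ.map (fun ω => (X ω, S ω))) :=
      (integral_map hT.aemeasurable φ₂m.aestronglyMeasurable).symm
    rw [L, R, hf_density]
    have hd : (fun p : ℝ × γ => ENNReal.ofReal (f p.1 p.2))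
        = fun p : ℝ × γ => ((fun q : ℝ × γ => (f q.1 q.2).toNNReal) p : ℝ≥0∞) := rfl
    rw [hd, integral_withDensity_eq_integral_smul (hfm.real_toNNReal),
      integral_withDensity_eq_integral_smul (hfm.real_toNNReal)]
    have hL : ∀ p : ℝ × γ, (f p.1 p.2).toNNReal • ((f (p.1 - δ) p.2 / f p.1 p.2) * g p)
        = f (p.1 - δ) p.2 * g p := by
      intro p
      have h0 : f p.1 p.2 ≠ 0 := (hf_pos _ _).ne'
      rw [NNReal.smul_def, Real.coe_toNNReal _ (hf_pos _ _).le, smul_eq_mul]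
      field_simp
    have hR : ∀ p : ℝ × γ, (f p.1 p.2).toNNReal • g (p.1 + δ, p.2)
        = f p.1 p.2 * g (p.1 + δ, p.2) := by
      intro p
      rw [NNReal.smul_def, Real.coe_toNNReal _ (hf_pos _ _).le, smul_eq_mul]
    simp only [hL, hR]
    -- change of variables: translate first coordinate by δ
    have hmp : MeasurePreserving (fun p : ℝ × γ => (p.1 + δ, p.2))
        ((volume : Measure ℝ).prod ν) ((volume : Measure ℝ).prod ν) :=
      (measurePreserving_add_right volume δ).prod (MeasurePreserving.id ν)
    have hemb : MeasurableEmbedding (fun p : ℝ × γ => (p.1 + δ, p.2)) := by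
      have : (fun p : ℝ × γ => (p.1 + δ, p.2))
          = fun p : ℝ × γ => ((Homeomorph.addRight δ).toMeasurableEquiv.prodCongr
              (MeasurableEquiv.refl γ)) p := rfl
      rw [this]
      exact MeasurableEquiv.measurableEmbedding _
    have := hmp.integral_comp hemb (fun p : ℝ × γ => f (p.1 - δ) p.2 * g p)
    simp only [add_sub_cancel_right] at this
    exact this.symm
  rw [integral_add h_int1 h_int2]
  have : ∫ ω, (f (X ω - δ) (S ω) / f (X ω) (S ω)) * (Y ω - g (X ω, S ω)) ∂μ
      = ∫ ω, (f (X ω - δ) (S ω) / f (X ω) (S ω)) * Y ω ∂μ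
        - ∫ ω, (f (X ω - δ) (S ω) / f (X ω) (S ω)) * g (X ω, S ω) ∂μ := by
    rw [← integral_sub h_int3 h_intwg]
    congr 1; funext ω; ring
  rw [this, key]; ring
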